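/- Let s, t, t' be nonnegative integrable functions on a measure space (𝒳, 𝒜, μ), let r = (t+t')/2, and define ψ(t,t',x) = (1/√2)[√(t'(x)/(t(x)+t'(x))) − √(t(x)/(t(x)+t'(x)))]. Then ∫ ψ(t,t',x)² s(x) dμ(x) ≤ 3[H²(s,t) + H²(s,t')], where H²(u,v) = (1/2)∫(√u−√v)² dμ. -/

import Mathlib

open MeasureTheory

lemma stmt_7_key (c u v : ℝ) :
    (v - u)^2 * c^2 ≤ 3 * (u^2 + v^2) * ((c - u)^2 + (c - v)^2) := by
  nlinarith [sq_nonneg (c-u), sq_nonneg (c-v), sq_nonneg (u-v), sq_nonneg (u+v-2*c),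
    sq_nonneg (u*v - c*c), sq_nonneg ((u+v)*c - u*v), sq_nonneg (c*(u+v) - 2*u*v)]

lemma stmt_7_pointwise (sx tx t'x : ℝ) (hs : 0 ≤ sx) (ht : 0 ≤ tx) (ht' : 0 ≤ t'x) :
    ((1 / Real.sqrt 2) * (Real.sqrt (t'x / (tx + t'x))
        - Real.sqrt (tx / (tx + t'x))))^2 * sx
      ≤ (3/2) * ((Real.sqrt sx - Real.sqrt tx)^2 + (Real.sqrt sx - Real.sqrt t'x)^2) := by
  rcases eq_or_lt_of_le (by positivity : (0:ℝ) ≤ tx + t'x) with h | h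
  · have h1 : tx = 0 := by linarith
    have h2 : t'x = 0 := by linarith
    subst h1 h2
    simp only [add_zero, zero_div, Real.sqrt_zero, sub_zero, mul_zero, ne_eq]
    nlinarith [sq_nonneg (Real.sqrt sx)]
  · rw [Real.sqrt_div ht', Real.sqrt_div ht]
    set c := Real.sqrt sx with hcdef
    set u := Real.sqrt tx with hudef
    set v := Real.sqrt t'x with hvdef
    set w := Real.sqrt (tx + t'x) with hwdef
    have hwpos : 0 < w := Real.sqrt_pos.2 h
    have hw2 : w^2 = tx + t'x := Real.sq_sqrt h.le
    have hc2 : c^2 = sx := Real.sq_sqrt hs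
    have hu2 : u^2 = tx := Real.sq_sqrt ht
    have hv2 : v^2 = t'x := Real.sq_sqrt ht'
    have hs2 : (Real.sqrt 2)^2 = 2 := Real.sq_sqrt (by norm_num)
    have hs2pos : (0:ℝ) < Real.sqrt 2 := Real.sqrt_pos.2 (by norm_num)
    have hhalf : (1 / Real.sqrt 2)^2 = 1/2 := by
      rw [div_pow, one_pow, hs2]
    have hLHS : ((1 / Real.sqrt 2) * (v / w - u / w))^2 * sx
        = (v - u)^2 * c^2 / (2 * w^2) := by
      rw [← hc2, div_sub_div_same, mul_pow, hhalf, div_pow]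
      field_simp
    rw [hLHS, div_le_iff₀ (by positivity)]
    have hkey := stmt_7_key c u v
    rw [hu2, hv2] at hkey
    rw [hw2]
    nlinarith [hkey]

theorem stmt_7 {𝒳 : Type*} [MeasurableSpace 𝒳] (μ : Measure 𝒳) (s t t' : 𝒳 → ℝ)
    (hs : ∀ x, 0 ≤ s x) (ht : ∀ x, 0 ≤ t x) (ht' : ∀ x, 0 ≤ t' x)
    (hsi : Integrable s μ) (hti : Integrable t μ) (ht'i : Integrable t' μ) :
    (∫ x, ((1 / Real.sqrt 2) * (Real.sqrt (t' x / (t x + t' x))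
          - Real.sqrt (t x / (t x + t' x))))^2 * s x ∂μ)
      ≤ 3 * ((1/2) * (∫ x, (Real.sqrt (s x) - Real.sqrt (t x))^2 ∂μ)
          + (1/2) * (∫ x, (Real.sqrt (s x) - Real.sqrt (t' x))^2 ∂μ)) := by
  -- measurability pieces
  have msqrt : ∀ (f : 𝒳 → ℝ), AEStronglyMeasurable f μ →
      AEStronglyMeasurable (fun x => Real.sqrt (f x)) μ :=
    fun f hf => Real.continuous_sqrt.comp_aestronglyMeasurable hf
  have hAm : AEStronglyMeasurable (fun x => (Real.sqrt (s x) - Real.sqrt (t x))^2) μ := by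
    have := (msqrt s hsi.1).sub (msqrt t hti.1)
    simpa [pow_two, Pi.mul_def, Pi.sub_def] using this.mul this
  have hBm : AEStronglyMeasurable (fun x => (Real.sqrt (s x) - Real.sqrt (t' x))^2) μ := by
    have := (msqrt s hsi.1).sub (msqrt t' ht'i.1)
    simpa [pow_two, Pi.mul_def, Pi.sub_def] using this.mul this
  -- integrability of A and B
  have hbound : ∀ (f g : 𝒳 → ℝ), (∀ x, 0 ≤ f x) → (∀ x, 0 ≤ g x) →
      ∀ x, |(Real.sqrt (f x) - Real.sqrt (g x))^2| ≤ 2 * f x + 2 * g x := by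
    intro f g hf hg x
    rw [abs_of_nonneg (sq_nonneg _)]
    nlinarith [Real.sq_sqrt (hf x), Real.sq_sqrt (hg x), Real.sqrt_nonneg (f x),
      Real.sqrt_nonneg (g x), sq_nonneg (Real.sqrt (f x) + Real.sqrt (g x))]
  have hA : Integrable (fun x => (Real.sqrt (s x) - Real.sqrt (t x))^2) μ :=
    Integrable.mono' ((hsi.const_mul 2).add (hti.const_mul 2)) hAm
      (Filter.Eventually.of_forall (hbound s t hs ht))
  have hB : Integrable (fun x => (Real.sqrt (s x) - Real.sqrt (t' x))^2) μ :=
    Integrable.mono' ((hsi.const_mul 2).add (ht'i.const_mul 2)) hBm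
      (Filter.Eventually.of_forall (hbound s t' hs ht'))
  have hg : Integrable (fun x => (3/2) * ((Real.sqrt (s x) - Real.sqrt (t x))^2
      + (Real.sqrt (s x) - Real.sqrt (t' x))^2)) μ := ((hA.add hB).const_mul _)
  -- pointwise bound
  have hpt : ∀ x, ((1 / Real.sqrt 2) * (Real.sqrt (t' x / (t x + t' x))
        - Real.sqrt (t x / (t x + t' x))))^2 * s x
      ≤ (3/2) * ((Real.sqrt (s x) - Real.sqrt (t x))^2
        + (Real.sqrt (s x) - Real.sqrt (t' x))^2) :=
    fun x => stmt_7_pointwise (s x) (t x) (t' x) (hs x) (ht x) (ht' x)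
  -- integrability of the LHS integrand
  have hLm : AEStronglyMeasurable (fun x => ((1 / Real.sqrt 2) *
      (Real.sqrt (t' x / (t x + t' x)) - Real.sqrt (t x / (t x + t' x))))^2 * s x) μ := by
    have hsum : AEMeasurable (fun x => t x + t' x) μ :=
      hti.1.aemeasurable.add ht'i.1.aemeasurable
    have h1 : AEMeasurable (fun x => Real.sqrt (t' x / (t x + t' x))) μ :=
      Real.continuous_sqrt.measurable.comp_aemeasurable
        (ht'i.1.aemeasurable.div hsum)
    have h2 : AEMeasurable (fun x => Real.sqrt (t x / (t x + t' x))) μ :=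
      Real.continuous_sqrt.measurable.comp_aemeasurable
        (hti.1.aemeasurable.div hsum)
    have h3 : AEMeasurable (fun x => (1 / Real.sqrt 2) *
        (Real.sqrt (t' x / (t x + t' x)) - Real.sqrt (t x / (t x + t' x)))) μ :=
      aemeasurable_const.mul (h1.sub h2)
    exact (((h3.mul h3).mul hsi.1.aemeasurable).congr
      (Filter.Eventually.of_forall fun x => by simp only [Pi.mul_apply]; ring)).aestronglyMeasurable
  have hL : Integrable (fun x => ((1 / Real.sqrt 2) *
      (Real.sqrt (t' x / (t x + t' x)) - Real.sqrt (t x / (t x + t' x))))^2 * s x) μ := by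
    refine Integrable.mono' hg hLm (Filter.Eventually.of_forall fun x => ?_)
    rw [Real.norm_eq_abs, abs_of_nonneg (mul_nonneg (sq_nonneg _) (hs x))]
    exact hpt x
  have hmono := integral_mono hL hg hpt
  rw [integral_const_mul, integral_add hA hB] at hmono
  linarith
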